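/- Let n ≥ 2, let a_1, …, a_n ∈ ℝ^d, U > 0, let i ∈ {1,…,n} and b ∈ {1,…,n}, and let S^i be a uniformly random (b−1)-element subset of [n]∖{i} (expectations below are averages over all C(n−1,b−1) such subsets). Then U·E[λ_max((1/b)·Σ_{j∈S^i∪{i}} a_j a_jᵀ)] ≤ (1/(b(n−1)))·((n−b)·L_i + n(b−1)·L) + U·E[λ_max((1/b)·Σ_{j∈S^i} a_j a_jᵀ − (1/b)·((b−1)/(n−1))·Σ_{j∈[n]∖{i}} a_j a_jᵀ)], where L_i := U‖a_i‖₂² and L := (U/n)·λ_max(Σ_{j=1}^n a_j a_jᵀ). -/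

import Mathlib

open Finset Matrix

/-- `lamMax A` is the largest eigenvalue of a real symmetric matrix `A`,
expressed as the supremum of the Rayleigh quotient over unit vectors. -/
noncomputable def lamMax {d : ℕ} (A : Matrix (Fin d) (Fin d) ℝ) : ℝ :=
  sSup {r : ℝ | ∃ x : Fin d → ℝ, (∑ j, x j ^ 2) = 1 ∧ r = x ⬝ᵥ A.mulVec x}

lemma lamMax_bddAbove {d : ℕ} (A : Matrix (Fin d) (Fin d) ℝ) :
    BddAbove {r : ℝ | ∃ x : Fin d → ℝ, (∑ j, x j ^ 2) = 1 ∧ r = x ⬝ᵥ A.mulVec x} := by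
  refine ⟨∑ j, ∑ k, |A j k|, ?_⟩
  rintro r ⟨x, hx, rfl⟩
  have hx1 : ∀ j, |x j| ≤ 1 := by
    intro j
    have h1 : x j ^ 2 ≤ 1 := by
      rw [← hx]
      exact Finset.single_le_sum (f := fun j => x j ^ 2) (fun _ _ => sq_nonneg _)
        (Finset.mem_univ j)
    nlinarith [abs_nonneg (x j), sq_abs (x j)]
  calc x ⬝ᵥ A.mulVec x ≤ |x ⬝ᵥ A.mulVec x| := le_abs_self _
    _ ≤ ∑ j, ∑ k, |A j k| := by
        simp only [dotProduct, Matrix.mulVec]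
        refine le_trans (Finset.abs_sum_le_sum_abs _ _) (Finset.sum_le_sum fun j _ => ?_)
        rw [abs_mul]
        calc |x j| * |∑ k, A j k * x k| ≤ 1 * ∑ k, |A j k| := by
              refine mul_le_mul (hx1 j) (le_trans (Finset.abs_sum_le_sum_abs _ _)
                (Finset.sum_le_sum fun k _ => ?_)) (abs_nonneg _) zero_le_one
              rw [abs_mul]
              calc |A j k| * |x k| ≤ |A j k| * 1 :=
                    mul_le_mul_of_nonneg_left (hx1 k) (abs_nonneg _)
                _ = |A j k| := mul_one _
          _ = ∑ k, |A j k| := one_mul _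

lemma rayleigh_le_lamMax {d : ℕ} (A : Matrix (Fin d) (Fin d) ℝ) (x : Fin d → ℝ)
    (hx : (∑ j, x j ^ 2) = 1) : x ⬝ᵥ A.mulVec x ≤ lamMax A :=
  le_csSup (lamMax_bddAbove A) ⟨x, hx, rfl⟩

lemma rayleigh_vecMulVec {d : ℕ} (v x : Fin d → ℝ) :
    x ⬝ᵥ (Matrix.vecMulVec v v).mulVec x = (∑ k, v k * x k) ^ 2 := by
  simp only [dotProduct, Matrix.mulVec, Matrix.vecMulVec, Matrix.of_apply]
  rw [sq, Finset.sum_mul_sum]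
  refine Finset.sum_congr rfl fun j _ => ?_
  rw [Finset.mul_sum]
  refine Finset.sum_congr rfl fun k _ => ?_
  ring

/-- The key per-subset bound. -/
lemma lamMax_decomp_le {d : ℕ} (hd : 0 < d) (N S : Matrix (Fin d) (Fin d) ℝ)
    (v : Fin d → ℝ) (α β : ℝ) (hα : 0 ≤ α) (hβ : 0 ≤ β) :
    lamMax (N + α • Matrix.vecMulVec v v + β • S) ≤
      lamMax N + (α * ∑ k, v k ^ 2 + β * lamMax S) := by
  have hne : {r : ℝ | ∃ x : Fin d → ℝ, (∑ j, x j ^ 2) = 1 ∧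
      r = x ⬝ᵥ (N + α • Matrix.vecMulVec v v + β • S).mulVec x}.Nonempty := by
    refine ⟨_, Pi.single ⟨0, hd⟩ 1, ?_, rfl⟩
    simp [Pi.single_apply, Finset.sum_ite_eq']
  refine csSup_le hne ?_
  rintro r ⟨x, hx, rfl⟩
  have expand : x ⬝ᵥ (N + α • Matrix.vecMulVec v v + β • S).mulVec x =
      x ⬝ᵥ N.mulVec x + α * (x ⬝ᵥ (Matrix.vecMulVec v v).mulVec x) + β * (x ⬝ᵥ S.mulVec x) := by
    simp [Matrix.add_mulVec, Matrix.smul_mulVec, dotProduct_add, dotProduct_smul,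
      smul_eq_mul]
  rw [expand]
  have h1 : x ⬝ᵥ N.mulVec x ≤ lamMax N := rayleigh_le_lamMax N x hx
  have h2 : x ⬝ᵥ (Matrix.vecMulVec v v).mulVec x ≤ ∑ k, v k ^ 2 := by
    rw [rayleigh_vecMulVec]
    calc (∑ k, v k * x k) ^ 2 ≤ (∑ k, v k ^ 2) * ∑ k, x k ^ 2 :=
          Finset.sum_mul_sq_le_sq_mul_sq _ _ _
      _ = ∑ k, v k ^ 2 := by rw [hx, mul_one]
  have h3 : x ⬝ᵥ S.mulVec x ≤ lamMax S := rayleigh_le_lamMax S x hx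
  nlinarith [mul_le_mul_of_nonneg_left h2 hα, mul_le_mul_of_nonneg_left h3 hβ]

lemma lamMax_zero_dim (A : Matrix (Fin 0) (Fin 0) ℝ) : lamMax A = 0 := by
  have : {r : ℝ | ∃ x : Fin 0 → ℝ, (∑ j, x j ^ 2) = 1 ∧ r = x ⬝ᵥ A.mulVec x} = ∅ := by
    ext r
    simp
  rw [lamMax, this, Real.sSup_empty]

/-- **Lemma bounding the expected subsample smoothness.** Averaging over all `(b−1)`-element
subsets `S^i` of `[n] ∖ {i}`,
`U·E[λ_max((1/b)∑_{j∈S^i∪{i}} a_j a_jᵀ)] ≤ (1/(b(n−1)))·((n−b)L_i + n(b−1)L)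
  + U·E[λ_max((1/b)∑_{j∈S^i} a_j a_jᵀ − (1/b)((b−1)/(n−1))∑_{j≠i} a_j a_jᵀ)]`,
with `L_i = U‖a_i‖₂²` and `L = (U/n)·λ_max(∑_j a_j a_jᵀ)`. -/
theorem bound_expected_subsample_smoothness
    {n d : ℕ} (hn : 2 ≤ n) (a : Fin n → Fin d → ℝ) (U : ℝ) (hU : 0 < U)
    (i : Fin n) (b : ℕ) (hb : 1 ≤ b) (hbn : b ≤ n) :
    U * ((1 / (((n - 1).choose (b - 1) : ℕ) : ℝ)) *
        ∑ B ∈ Finset.powersetCard (b - 1) (Finset.univ.erase i),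
          lamMax ((1 / (b : ℝ)) • ∑ j ∈ insert i B, Matrix.vecMulVec (a j) (a j))) ≤
      (1 / ((b : ℝ) * ((n : ℝ) - 1))) *
          (((n : ℝ) - (b : ℝ)) * (U * ∑ j, a i j ^ 2) +
            (n : ℝ) * ((b : ℝ) - 1) *
              ((U / (n : ℝ)) * lamMax (∑ j, Matrix.vecMulVec (a j) (a j)))) +
        U * ((1 / (((n - 1).choose (b - 1) : ℕ) : ℝ)) *
          ∑ B ∈ Finset.powersetCard (b - 1) (Finset.univ.erase i),
            lamMax ((1 / (b : ℝ)) • ∑ j ∈ B, Matrix.vecMulVec (a j) (a j) -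
              ((1 / (b : ℝ)) * (((b : ℝ) - 1) / ((n : ℝ) - 1))) •
                ∑ j ∈ Finset.univ.erase i, Matrix.vecMulVec (a j) (a j))) := by
  have hn1 : (1 : ℝ) ≤ (n : ℝ) - 1 := by
    have : (2 : ℝ) ≤ (n : ℝ) := by exact_mod_cast hn
    linarith
  have hn1pos : (0 : ℝ) < (n : ℝ) - 1 := by linarith
  have hbpos : (0 : ℝ) < (b : ℝ) := by exact_mod_cast hb
  have hb1 : (1 : ℝ) ≤ (b : ℝ) := by exact_mod_cast hb
  have hbn' : (b : ℝ) ≤ (n : ℝ) := by exact_mod_cast hbn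
  have hnpos : (0 : ℝ) < (n : ℝ) := by linarith
  set α : ℝ := ((n : ℝ) - b) / (b * ((n : ℝ) - 1)) with hα_def
  set β : ℝ := ((b : ℝ) - 1) / (b * ((n : ℝ) - 1)) with hβ_def
  have hα : 0 ≤ α := div_nonneg (by linarith) (by positivity)
  have hβ : 0 ≤ β := div_nonneg (by linarith) (by positivity)
  set S : Matrix (Fin d) (Fin d) ℝ := ∑ j, Matrix.vecMulVec (a j) (a j) with hS_def
  set lam : ℝ := lamMax S with hlam_def
  set K : ℝ := α * (∑ j, a i j ^ 2) + β * lam with hK_def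
  -- cardinality of the averaging set
  have hcard : (Finset.powersetCard (b - 1) (Finset.univ.erase i)).card =
      (n - 1).choose (b - 1) := by
    rw [Finset.card_powersetCard, Finset.card_erase_of_mem (Finset.mem_univ i),
      Finset.card_univ, Fintype.card_fin]
  have hchpos : 0 < (n - 1).choose (b - 1) :=
    Nat.choose_pos (by omega)
  have hC : (0 : ℝ) < (((n - 1).choose (b - 1) : ℕ) : ℝ) := by exact_mod_cast hchpos
  -- per-subset inequality
  have key : ∀ B ∈ Finset.powersetCard (b - 1) (Finset.univ.erase i),
      lamMax ((1 / (b : ℝ)) • ∑ j ∈ insert i B, Matrix.vecMulVec (a j) (a j)) ≤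
        K + lamMax ((1 / (b : ℝ)) • ∑ j ∈ B, Matrix.vecMulVec (a j) (a j) -
          ((1 / (b : ℝ)) * (((b : ℝ) - 1) / ((n : ℝ) - 1))) •
            ∑ j ∈ Finset.univ.erase i, Matrix.vecMulVec (a j) (a j)) := by
    intro B hB
    rw [Finset.mem_powersetCard] at hB
    have hiB : i ∉ B := fun h => (Finset.mem_erase.1 (hB.1 h)).1 rfl
    rcases Nat.eq_zero_or_pos d with hd | hd
    · subst hd
      rw [lamMax_zero_dim, lamMax_zero_dim]
      have hlam0 : lam = 0 := lamMax_zero_dim S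
      have : (∑ j, a i j ^ 2) = 0 := by simp
      rw [hK_def, this, hlam0]
      simp
    · -- decompose the matrix
      set N : Matrix (Fin d) (Fin d) ℝ :=
        (1 / (b : ℝ)) • ∑ j ∈ B, Matrix.vecMulVec (a j) (a j) -
          ((1 / (b : ℝ)) * (((b : ℝ) - 1) / ((n : ℝ) - 1))) •
            ∑ j ∈ Finset.univ.erase i, Matrix.vecMulVec (a j) (a j) with hN_def
      have hSe : S = Matrix.vecMulVec (a i) (a i) +
          ∑ j ∈ Finset.univ.erase i, Matrix.vecMulVec (a j) (a j) := by
        rw [hS_def, ← Finset.add_sum_erase _ _ (Finset.mem_univ i)]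
      have hdecomp : (1 / (b : ℝ)) • ∑ j ∈ insert i B, Matrix.vecMulVec (a j) (a j) =
          N + α • Matrix.vecMulVec (a i) (a i) + β • S := by
        rw [Finset.sum_insert hiB, hN_def, hSe]
        have h1 : α + β = 1 / (b : ℝ) := by
          rw [hα_def, hβ_def, ← add_div]
          rw [show (n : ℝ) - b + ((b : ℝ) - 1) = (n : ℝ) - 1 by ring]
          rw [div_eq_div_iff (by positivity) hbpos.ne']
          ring
        have h2 : β = (1 / (b : ℝ)) * (((b : ℝ) - 1) / ((n : ℝ) - 1)) := by
          rw [hβ_def]; field_simp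
        rw [← h2, ← h1]
        module
      rw [hdecomp]
      have := lamMax_decomp_le hd N S (a i) α β hα hβ
      rw [← hlam_def] at this
      linarith [hK_def]
  -- sum the per-subset inequality
  have hsum : ∑ B ∈ Finset.powersetCard (b - 1) (Finset.univ.erase i),
      lamMax ((1 / (b : ℝ)) • ∑ j ∈ insert i B, Matrix.vecMulVec (a j) (a j)) ≤
      (((n - 1).choose (b - 1) : ℕ) : ℝ) * K +
      ∑ B ∈ Finset.powersetCard (b - 1) (Finset.univ.erase i),
        lamMax ((1 / (b : ℝ)) • ∑ j ∈ B, Matrix.vecMulVec (a j) (a j) -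
          ((1 / (b : ℝ)) * (((b : ℝ) - 1) / ((n : ℝ) - 1))) •
            ∑ j ∈ Finset.univ.erase i, Matrix.vecMulVec (a j) (a j)) := by
    calc _ ≤ ∑ B ∈ Finset.powersetCard (b - 1) (Finset.univ.erase i),
          (K + lamMax ((1 / (b : ℝ)) • ∑ j ∈ B, Matrix.vecMulVec (a j) (a j) -
            ((1 / (b : ℝ)) * (((b : ℝ) - 1) / ((n : ℝ) - 1))) •
              ∑ j ∈ Finset.univ.erase i, Matrix.vecMulVec (a j) (a j))) :=
        Finset.sum_le_sum key
      _ = _ := by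
        rw [Finset.sum_add_distrib, Finset.sum_const, hcard, nsmul_eq_mul]
  -- the fixed term equals the stated constant
  have hKeq : (1 / ((b : ℝ) * ((n : ℝ) - 1))) *
      (((n : ℝ) - (b : ℝ)) * (U * ∑ j, a i j ^ 2) +
        (n : ℝ) * ((b : ℝ) - 1) * ((U / (n : ℝ)) * lam)) = U * K := by
    rw [hK_def, hα_def, hβ_def]
    field_simp
  rw [hKeq]
  have step : (1 / (((n - 1).choose (b - 1) : ℕ) : ℝ)) *
      ∑ B ∈ Finset.powersetCard (b - 1) (Finset.univ.erase i),
        lamMax ((1 / (b : ℝ)) • ∑ j ∈ insert i B, Matrix.vecMulVec (a j) (a j)) ≤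
      K + (1 / (((n - 1).choose (b - 1) : ℕ) : ℝ)) *
        ∑ B ∈ Finset.powersetCard (b - 1) (Finset.univ.erase i),
          lamMax ((1 / (b : ℝ)) • ∑ j ∈ B, Matrix.vecMulVec (a j) (a j) -
            ((1 / (b : ℝ)) * (((b : ℝ) - 1) / ((n : ℝ) - 1))) •
              ∑ j ∈ Finset.univ.erase i, Matrix.vecMulVec (a j) (a j)) := by
    rw [div_mul_eq_mul_div, div_mul_eq_mul_div, one_mul, one_mul, div_le_iff₀ hC,
      add_mul]
    calc _ ≤ (((n - 1).choose (b - 1) : ℕ) : ℝ) * K + ∑ B ∈ _, _ := hsum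
      _ ≤ _ := by
        rw [mul_comm (((n - 1).choose (b - 1) : ℕ) : ℝ) K]
        gcongr
        rw [div_mul_cancel₀ _ hC.ne']
  calc U * _ ≤ U * (K + (1 / (((n - 1).choose (b - 1) : ℕ) : ℝ)) *
        ∑ B ∈ Finset.powersetCard (b - 1) (Finset.univ.erase i),
          lamMax ((1 / (b : ℝ)) • ∑ j ∈ B, Matrix.vecMulVec (a j) (a j) -
            ((1 / (b : ℝ)) * (((b : ℝ) - 1) / ((n : ℝ) - 1))) •
              ∑ j ∈ Finset.univ.erase i, Matrix.vecMulVec (a j) (a j))) :=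
      mul_le_mul_of_nonneg_left step hU.le
    _ = _ := by ring
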